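/- Let V ⊆ ℂ^{n+2} be the complexification of a B-nondegenerate real subspace, α ∈ ℂ× with α ∉ {1, −1}, and L a null line such that L and ρ_V L are complementary; write p := p^V_{α,L}. Then p(0)^{-1} ∘ p(∞) = Γ^L_{ρ_V L}(−1); this automorphism maps V to itself; the subspace (L ⊕ ρ_V L)^⊥ ∩ V has codimension 1 in V and Γ^L_{ρ_V L}(−1)|_V is the reflection of V across it; and det(Γ^L_{ρ_V L}(−1)|_V) = −1. -/

import Mathlib

noncomputable section

open Module

/-- The complexification `ℂ^{n+2}` of `ℝ^{n+1,1}`. -/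
abbrev Cn (n : ℕ) := Fin (n + 2) → ℂ

/-- The complex-bilinear extension `B` of the signature `(n+1,1)` inner product on
`ℝ^{n+1,1}`. -/
def Bf (n : ℕ) (v w : Cn n) : ℂ :=
  ∑ i : Fin (n + 2), (if (i : ℕ) < n + 1 then 1 else -1) * v i * w i

lemma Bf_add_left {n : ℕ} (v v' w : Cn n) :
    Bf n (v + v') w = Bf n v w + Bf n v' w := by
  simp only [Bf, Pi.add_apply, ← Finset.sum_add_distrib]
  exact Finset.sum_congr rfl fun i _ => by ring

lemma Bf_smul_left {n : ℕ} (c : ℂ) (v w : Cn n) :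
    Bf n (c • v) w = c * Bf n v w := by
  simp only [Bf, Pi.smul_apply, smul_eq_mul, Finset.mul_sum]
  exact Finset.sum_congr rfl fun i _ => by ring

lemma Bf_zero_left {n : ℕ} (w : Cn n) : Bf n 0 w = 0 := by
  simp [Bf]

/-- Complex conjugation on `ℂ^{n+2}`, as a `conj`-semilinear automorphism;
its fixed point set is `ℝ^{n+1,1}`. -/
def conjSL (n : ℕ) : Cn n →ₛₗ[starRingEnd ℂ] Cn n where
  toFun v := fun i => starRingEnd ℂ (v i)
  map_add' a b := by funext i; simp
  map_smul' c v := by funext i; simp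

instance : RingHomSurjective (starRingEnd ℂ) :=
  ⟨fun x => ⟨starRingEnd ℂ x, by simp⟩⟩

/-- The conjugate `Ū` of a complex subspace `U` of `ℂ^{n+2}`. -/
def conjSub {n : ℕ} (U : Submodule ℂ (Cn n)) : Submodule ℂ (Cn n) :=
  U.map (conjSL n)

/-- The real points `ℝ^{n+1,1}` inside `ℂ^{n+2}`, as a real subspace. -/
def realSub (n : ℕ) : Submodule ℝ (Cn n) where
  carrier := {v | ∀ i, starRingEnd ℂ (v i) = v i}
  add_mem' := by
    intro a b ha hb i
    simp only [Pi.add_apply, map_add, ha i, hb i]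
  zero_mem' := by intro i; simp
  smul_mem' := by
    intro c v hv i
    simp only [Pi.smul_apply, Complex.real_smul, map_mul, Complex.conj_ofReal, hv i]

/-- The real points `W ∩ ℝ^{n+1,1}` of a complex subspace `W ⊆ ℂ^{n+2}`. -/
def realPoints {n : ℕ} (W : Submodule ℂ (Cn n)) : Submodule ℝ (Cn n) :=
  (W.restrictScalars ℝ) ⊓ realSub n

/-- The Gram matrix `diag(1,1,1,-1)`. -/
def gram31 (i j : Fin 4) : ℂ :=
  if i = j then (if (i : ℕ) < 3 then 1 else -1) else 0

/-- A real subspace `P` of `ℂ^{n+2}` has signature `(3,1)` if it admits a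
basis whose Gram matrix with respect to `B` is `diag(1,1,1,-1)`. -/
def hasSig31 (n : ℕ) (P : Submodule ℝ (Cn n)) : Prop :=
  ∃ b : Fin 4 → Cn n, (∀ i, b i ∈ P) ∧
    Submodule.span ℝ (Set.range b) = P ∧
    ∀ i j, Bf n (b i) (b j) = gram31 i j

/-- The orthogonal complement of a subspace with respect to `B`. -/
def perp (n : ℕ) (V : Submodule ℂ (Cn n)) : Submodule ℂ (Cn n) where
  carrier := {v | ∀ w ∈ V, Bf n v w = 0}
  add_mem' := by
    intro a b ha hb w hw
    rw [Bf_add_left, ha w hw, hb w hw, add_zero]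
  zero_mem' := by
    intro w hw
    exact Bf_zero_left w
  smul_mem' := by
    intro c v hv w hw
    rw [Bf_smul_left, hv w hw, mul_zero]

/-- `ρ` is the reflection across `V`: the identity on `V` and minus the identity
on `V^⊥`. -/
def IsReflection (n : ℕ) (V : Submodule ℂ (Cn n)) (ρ : Cn n →ₗ[ℂ] Cn n) : Prop :=
  (∀ v ∈ V, ρ v = v) ∧ (∀ v ∈ perp n V, ρ v = -v)

/-- The automorphism `Γ^{ℓ⁺}_{ℓ⁻}(λ)`, where `ℓ⁺, ℓ⁻` are the complementary null
lines spanned by `u` and `w`: it is multiplication by `λ` on `ℓ⁺`, by `λ⁻¹` on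
`ℓ⁻` and the identity on `(ℓ⁺ ⊕ ℓ⁻)^⊥`. -/
def GammaL (n : ℕ) (u w : Cn n) (lam : ℂ) : Cn n →ₗ[ℂ] Cn n where
  toFun v := v + ((lam - 1) * (Bf n v w / Bf n u w)) • u
      + ((lam⁻¹ - 1) * (Bf n v u / Bf n u w)) • w
  map_add' a b := by
    simp only [Bf_add_left]
    module
  map_smul' c v := by
    simp only [Bf_smul_left, RingHom.id_apply]
    module

/-- `λ ↦ λ* = 1/λ̄`. -/
def cstar (z : ℂ) : ℂ := (starRingEnd ℂ z)⁻¹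

/-- The linear fractional transformation appearing in the simple factor
`p^V_{α,L}`. -/
def psi (α lam : ℂ) : ℂ := (1 + α) * (lam - α) / ((1 - α) * (lam + α))

/-- The simple factor `p^V_{α,L}(λ) = Γ^L_{ρ_V L}((1+α)(λ-α)/((1-α)(λ+α)))`,
where `ρ` is the reflection across `V` and `ℓ` spans the null line `L`. -/
def pSF (n : ℕ) (ρ : Cn n →ₗ[ℂ] Cn n) (ℓ : Cn n) (α lam : ℂ) : Cn n →ₗ[ℂ] Cn n :=
  GammaL n ℓ (ρ ℓ) (psi α lam)

/-- The value `p^V_{α,L}(∞) = Γ^L_{ρ_V L}((1+α)/(1-α))`. -/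
def pSFinf (n : ℕ) (ρ : Cn n →ₗ[ℂ] Cn n) (ℓ : Cn n) (α : ℂ) : Cn n →ₗ[ℂ] Cn n :=
  GammaL n ℓ (ρ ℓ) ((1 + α) / (1 - α))


/-! ### Auxiliary lemmas -/

lemma Bf_symm {n : ℕ} (v w : Cn n) : Bf n v w = Bf n w v :=
  Finset.sum_congr rfl fun i _ => by ring

lemma Bf_add_right {n : ℕ} (v w w' : Cn n) :
    Bf n v (w + w') = Bf n v w + Bf n v w' := by
  rw [Bf_symm, Bf_add_left, Bf_symm w v, Bf_symm w' v]

lemma Bf_smul_right {n : ℕ} (c : ℂ) (v w : Cn n) :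
    Bf n v (c • w) = c * Bf n v w := by
  rw [Bf_symm, Bf_smul_left, Bf_symm]

/-- `B` as a bilinear form. -/
def Bb (n : ℕ) : LinearMap.BilinForm ℂ (Cn n) :=
  LinearMap.mk₂ ℂ (Bf n) Bf_add_left (fun c v w => by rw [Bf_smul_left]; rfl)
    Bf_add_right (fun c v w => by rw [Bf_smul_right]; rfl)

@[simp] lemma Bb_apply {n : ℕ} (v w : Cn n) : Bb n v w = Bf n v w := rfl

lemma Bb_isRefl (n : ℕ) : (Bb n).IsRefl := fun x y h => by
  rw [Bb_apply, Bf_symm]; exact h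

lemma GammaL_apply {n : ℕ} (u w : Cn n) (lam : ℂ) (v : Cn n) :
    GammaL n u w lam v = v + ((lam - 1) * (Bf n v w / Bf n u w)) • u
      + ((lam⁻¹ - 1) * (Bf n v u / Bf n u w)) • w := rfl

lemma GammaL_one {n : ℕ} (u w : Cn n) : GammaL n u w 1 = LinearMap.id := by
  ext v i
  simp [GammaL_apply]

lemma GammaL_comp {n : ℕ} (u w : Cn n) (hu : Bf n u u = 0) (hw : Bf n w w = 0)
    (hc : Bf n u w ≠ 0) (lam mu : ℂ) (hlam : lam ≠ 0) (hmu : mu ≠ 0) :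
    (GammaL n u w mu).comp (GammaL n u w lam) = GammaL n u w (mu * lam) := by
  have hdc : ∀ x : ℂ, x / Bf n u w * Bf n u w = x := fun x => div_mul_cancel₀ x hc
  refine LinearMap.ext fun v => ?_
  have e1 : Bf n (GammaL n u w lam v) w = lam * Bf n v w := by
    rw [GammaL_apply, Bf_add_left, Bf_add_left, Bf_smul_left, Bf_smul_left, hw, mul_zero,
      add_zero, mul_assoc, hdc]
    ring
  have e2 : Bf n (GammaL n u w lam v) u = lam⁻¹ * Bf n v u := by
    rw [GammaL_apply, Bf_add_left, Bf_add_left, Bf_smul_left, Bf_smul_left, hu, mul_zero,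
      add_zero, Bf_symm w u, mul_assoc, hdc]
    ring
  rw [LinearMap.comp_apply, GammaL_apply u w mu (GammaL n u w lam v), e1, e2,
    GammaL_apply u w lam v, GammaL_apply u w (mu * lam) v, mul_inv_rev]
  match_scalars <;> ring

set_option synthInstance.maxHeartbeats 1000000
set_option maxHeartbeats 1000000

/-- Let `V` be the complexification of a `B`-nondegenerate real
subspace (with reflection `ρ = ρ_V`), `α ∈ ℂ^× ∖ {1, -1}`, and `L = ⟨ℓ⟩` a null line
with `L, ρ_V L` complementary; write `p = p^V_{α,L}`.  Then
`p(0)⁻¹ ∘ p(∞) = Γ^L_{ρ_V L}(-1)`; this automorphism maps `V` to itself;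
`H := (L ⊕ ρ_V L)^⊥ ∩ V` has codimension 1 in `V` and `Γ^L_{ρ_V L}(-1)|_V` is the
reflection of `V` across `H`; and `det (Γ^L_{ρ_V L}(-1)|_V) = -1`. -/
theorem statement5 (n : ℕ) (V : Submodule ℂ (Cn n))
    (hVconj : conjSub V = V)
    (hVnd : ∀ v ∈ V, (∀ w ∈ V, Bf n v w = 0) → v = 0)
    (ρ : Cn n →ₗ[ℂ] Cn n) (hρ : IsReflection n V ρ)
    (α : ℂ) (hα : α ≠ 0) (hα1 : α ≠ 1) (hα1' : α ≠ -1)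
    (ℓ : Cn n) (hℓ : ℓ ≠ 0) (hℓnull : Bf n ℓ ℓ = 0)
    (hℓcompl : Bf n ℓ (ρ ℓ) ≠ 0)
    (H : Submodule ℂ (Cn n))
    (hH : H = perp n (Submodule.span ℂ {ℓ} ⊔ Submodule.span ℂ {ρ ℓ}) ⊓ V) :
    -- `p(0)⁻¹ ∘ p(∞) = Γ^L_{ρ_V L}(-1)`, stated as `p(∞) = p(0) ∘ Γ^L_{ρ_V L}(-1)`
    pSFinf n ρ ℓ α = (pSF n ρ ℓ α 0).comp (GammaL n ℓ (ρ ℓ) (-1)) ∧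
    -- `Γ^L_{ρ_V L}(-1)` maps `V` to itself
    Submodule.map (GammaL n ℓ (ρ ℓ) (-1)) V = V ∧
    -- `H` has codimension 1 in `V`
    Module.finrank ℂ V = Module.finrank ℂ H + 1 ∧
    -- `Γ^L_{ρ_V L}(-1)|_V` is the reflection of `V` across `H`:
    (∀ x ∈ H, GammaL n ℓ (ρ ℓ) (-1) x = x) ∧
    (ℓ + ρ ℓ ∈ V ∧ GammaL n ℓ (ρ ℓ) (-1) (ℓ + ρ ℓ) = -(ℓ + ρ ℓ) ∧
      H ⊔ Submodule.span ℂ {ℓ + ρ ℓ} = V) ∧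
    -- the determinant of the restriction to `V` is `-1`
    ∀ h : ∀ x ∈ V, GammaL n ℓ (ρ ℓ) (-1) x ∈ V,
      LinearMap.det ((GammaL n ℓ (ρ ℓ) (-1)).restrict h) = -1 := by
  classical
  have hrefl : (Bb n).IsRefl := Bb_isRefl n
  have hndV : ((Bb n).restrict V).Nondegenerate := by
    refine (LinearMap.IsRefl.nondegenerate_iff_separatingLeft (B := (Bb n).restrict V) (fun x y h => hrefl _ _ h)).mpr ?_
    intro x hx
    exact Subtype.ext (hVnd x.1 x.2 fun w hw => by simpa using hx ⟨w, hw⟩)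
  have hic : IsCompl V ((Bb n).orthogonal V) :=
    ((Bb n).restrict_nondegenerate_iff_isCompl_orthogonal hrefl).mp hndV
  have horth : (Bb n).orthogonal V = perp n V := by
    ext x
    constructor
    · intro hx w hw
      rw [Bf_symm]
      exact hx w hw
    · intro hx w hw
      show Bf n w x = 0
      rw [Bf_symm]
      exact hx w hw
  rw [horth] at hic
  -- decompose ℓ = a + b with a ∈ V, b ∈ V^⊥
  have hℓtop : ℓ ∈ V ⊔ perp n V := by rw [hic.sup_eq_top]; trivial
  obtain ⟨a, haV, b, hbP, hadd⟩ := Submodule.mem_sup.mp hℓtop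
  have hba : Bf n b a = 0 := hbP a haV
  have hab : Bf n a b = 0 := by rw [Bf_symm]; exact hba
  have hVb : ∀ v ∈ V, Bf n v b = 0 := fun v hv => by
    rw [Bf_symm]; exact hbP v hv
  have hwdef : ρ ℓ = a - b := by
    rw [← hadd, map_add, hρ.1 a haV, hρ.2 b hbP, sub_eq_add_neg]
  -- basic B-computations
  have hsumab : Bf n a a + Bf n b b = 0 := by
    have h0 := hℓnull
    rw [← hadd, Bf_add_left, Bf_add_right, Bf_add_right, hab, hba] at h0
    linear_combination h0
  have hcval : Bf n ℓ (ρ ℓ) = 2 * Bf n a a := by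
    rw [hwdef, ← hadd, Bf_add_left, sub_eq_add_neg, Bf_add_right, Bf_add_right]
    have h1 : Bf n a (-b) = -Bf n a b := by
      rw [show -b = (-1 : ℂ) • b by module, Bf_smul_right]; ring
    have h2 : Bf n b (-b) = -Bf n b b := by
      rw [show -b = (-1 : ℂ) • b by module, Bf_smul_right]; ring
    rw [h1, h2, hab, hba]
    linear_combination -hsumab
  have haa : Bf n a a ≠ 0 := by
    intro h
    rw [hcval, h, mul_zero] at hℓcompl
    exact hℓcompl rfl
  have hww : Bf n (ρ ℓ) (ρ ℓ) = 0 := by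
    rw [hwdef, sub_eq_add_neg, Bf_add_left, Bf_add_right, Bf_add_right]
    have h1 : Bf n a (-b) = -Bf n a b := by
      rw [show -b = (-1 : ℂ) • b by module, Bf_smul_right]; ring
    have h3 : Bf n (-b) a = -Bf n b a := by
      rw [show -b = (-1 : ℂ) • b by module, Bf_smul_left]; ring
    have h4 : Bf n (-b) (-b) = Bf n b b := by
      rw [show -b = (-1 : ℂ) • b by module, Bf_smul_left, Bf_smul_right]; ring
    rw [h1, h3, h4, hab, hba]
    linear_combination hsumab
  -- B(v, ℓ) = B(v, ρℓ) = B(v, a) for v ∈ V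
  have hVl : ∀ v ∈ V, Bf n v ℓ = Bf n v a := fun v hv => by
    rw [← hadd, Bf_add_right, hVb v hv, add_zero]
  have hVw : ∀ v ∈ V, Bf n v (ρ ℓ) = Bf n v a := fun v hv => by
    rw [hwdef, sub_eq_add_neg, Bf_add_right,
      show -b = (-1 : ℂ) • b by module, Bf_smul_right, hVb v hv]
    ring
  -- the formula for Γ(-1) on V
  have hGV : ∀ v ∈ V, GammaL n ℓ (ρ ℓ) (-1) v
      = v - (2 * Bf n v a / Bf n a a) • a := by
    intro v hv
    rw [GammaL_apply, hVw v hv, hVl v hv, hcval, hwdef, ← hadd]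
    match_scalars <;> (first | ring | (field_simp; try ring))
  have hGmem : ∀ v ∈ V, GammaL n ℓ (ρ ℓ) (-1) v ∈ V := fun v hv => by
    rw [hGV v hv]
    exact Submodule.sub_mem V hv (Submodule.smul_mem V _ haV)
  -- involutivity
  have hinv : (GammaL n ℓ (ρ ℓ) (-1)).comp (GammaL n ℓ (ρ ℓ) (-1)) = LinearMap.id := by
    rw [GammaL_comp ℓ (ρ ℓ) hℓnull hww hℓcompl (-1) (-1) (by norm_num) (by norm_num)]
    norm_num [GammaL_one]
  -- part 1
  have part1 : pSFinf n ρ ℓ α = (pSF n ρ ℓ α 0).comp (GammaL n ℓ (ρ ℓ) (-1)) := by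
    have h1α : (1 : ℂ) - α ≠ 0 := sub_ne_zero.mpr (Ne.symm hα1)
    have h1α' : (1 : ℂ) + α ≠ 0 := by
      intro h
      apply hα1'
      linear_combination h
    have hpsi0 : psi α 0 = -((1 + α) / (1 - α)) := by
      unfold psi
      rw [zero_sub, zero_add]
      field_simp
    have hpsine : psi α 0 ≠ 0 := by
      rw [hpsi0]
      simp only [ne_eq, neg_eq_zero, div_eq_zero_iff, not_or]
      exact ⟨h1α', h1α⟩
    unfold pSF pSFinf
    rw [GammaL_comp ℓ (ρ ℓ) hℓnull hww hℓcompl (-1) (psi α 0) (by norm_num) hpsine,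
      hpsi0]
    congr 1
    ring
  -- part 2
  have part2 : Submodule.map (GammaL n ℓ (ρ ℓ) (-1)) V = V := by
    apply le_antisymm
    · rintro x ⟨v, hv, rfl⟩
      exact hGmem v hv
    · intro v hv
      refine ⟨GammaL n ℓ (ρ ℓ) (-1) v, hGmem v hv, ?_⟩
      have := LinearMap.congr_fun hinv v
      simpa using this
  -- membership in H
  have hmemH : ∀ x, x ∈ H ↔ x ∈ V ∧ Bf n x a = 0 := by
    intro x
    rw [hH, Submodule.mem_inf]
    constructor
    · rintro ⟨hxp, hxV⟩
      refine ⟨hxV, ?_⟩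
      have := hxp ℓ (Submodule.mem_sup_left (Submodule.mem_span_singleton_self ℓ))
      rwa [hVl x hxV] at this
    · rintro ⟨hxV, hxa⟩
      refine ⟨?_, hxV⟩
      intro y hy
      obtain ⟨y₁, hy₁, y₂, hy₂, rfl⟩ := Submodule.mem_sup.mp hy
      obtain ⟨c₁, rfl⟩ := Submodule.mem_span_singleton.mp hy₁
      obtain ⟨c₂, rfl⟩ := Submodule.mem_span_singleton.mp hy₂
      rw [Bf_add_right, Bf_smul_right, Bf_smul_right, hVl x hxV, hVw x hxV, hxa]
      ring
  -- part 4: Γ(-1) fixes H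
  have part4 : ∀ x ∈ H, GammaL n ℓ (ρ ℓ) (-1) x = x := by
    intro x hx
    obtain ⟨hxV, hxa⟩ := (hmemH x).mp hx
    rw [hGV x hxV, hxa]
    simp
  -- part 5
  have hyV : ℓ + ρ ℓ ∈ V := by
    rw [hwdef, ← hadd, show a + b + (a - b) = (2 : ℂ) • a by module]
    exact Submodule.smul_mem V _ haV
  have hy2a : ℓ + ρ ℓ = (2 : ℂ) • a := by
    rw [hwdef, ← hadd]; module
  have hGy : GammaL n ℓ (ρ ℓ) (-1) (ℓ + ρ ℓ) = -(ℓ + ρ ℓ) := by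
    rw [hGV _ hyV, hy2a, Bf_smul_left]
    match_scalars
    field_simp
    ring
  have part5 : H ⊔ Submodule.span ℂ {ℓ + ρ ℓ} = V := by
    apply le_antisymm
    · apply sup_le
      · rw [hH]; exact inf_le_right
      · rw [Submodule.span_singleton_le_iff_mem]
        exact hyV
    · intro v hv
      rw [Submodule.mem_sup]
      refine ⟨v - (Bf n v a / Bf n a a) • a, ?_, (Bf n v a / Bf n a a / 2) • (ℓ + ρ ℓ), ?_, ?_⟩
      · rw [hmemH]
        constructor
        · exact Submodule.sub_mem V hv (Submodule.smul_mem V _ haV)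
        · rw [sub_eq_add_neg, ← neg_smul, Bf_add_left, Bf_smul_left]
          field_simp
          ring
      · exact Submodule.smul_mem _ _ (Submodule.mem_span_singleton_self _)
      · rw [hy2a]
        match_scalars <;> (first | ring | (field_simp; try ring))
  have hBay : Bf n a (ℓ + ρ ℓ) = 2 * Bf n a a := by
    rw [hy2a, Bf_smul_right]
  have hHleV : H ≤ V := by rw [hH]; exact inf_le_right
  have hli : ∀ (cc : ℂ), ∀ x ∈ H, cc • (ℓ + ρ ℓ) + x = 0 → cc = 0 := by
    intro cc x hx hsum
    have hax : Bf n a x = 0 := by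
      rw [Bf_symm]
      exact ((hmemH x).mp hx).2
    have h2 : Bf n a (cc • (ℓ + ρ ℓ) + x) = 0 := by
      rw [hsum, Bf_symm, Bf_zero_left]
    rw [Bf_add_right, Bf_smul_right, hBay, hax, add_zero] at h2
    rcases mul_eq_zero.mp h2 with h3 | h3
    · exact h3
    · exact absurd h3 (by simp [haa])
  have hsp : ∀ z ∈ V, ∃ cc : ℂ, z + cc • (ℓ + ρ ℓ) ∈ H := by
    intro z hz
    refine ⟨-(Bf n a z / (2 * Bf n a a)), ?_⟩
    rw [hmemH]
    constructor
    · exact Submodule.add_mem V hz (Submodule.smul_mem V _ hyV)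
    · rw [Bf_add_left, Bf_smul_left, hy2a, Bf_smul_left, Bf_symm (z : Cn n) a]
      first
      | (field_simp; ring)
      | field_simp
  set m := Module.finrank ℂ H with hmdef
  set bH : Basis (Fin m) ℂ H := Module.finBasis ℂ H with hbHdef
  set bV : Basis (Fin (m + 1)) ℂ V :=
    Basis.mkFinConsOfLE (ℓ + ρ ℓ) hyV bH hHleV hli hsp with hbVdef
  have hcoe : ⇑bV = Fin.cons ⟨ℓ + ρ ℓ, hyV⟩ (Submodule.inclusion hHleV ∘ bH) :=
    Basis.coe_mkFinConsOfLE (ℓ + ρ ℓ) hyV bH hHleV hli hsp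
  have part3 : Module.finrank ℂ V = Module.finrank ℂ H + 1 := by
    rw [Module.finrank_eq_card_basis bV, Fintype.card_fin]
  refine ⟨part1, part2, part3, part4, ⟨hyV, hGy, part5⟩, ?_⟩
  -- determinant
  intro h
  set d : Fin (m + 1) → ℂ := Fin.cons (-1) (fun _ => 1) with hddef
  have hgb : ∀ j, (GammaL n ℓ (ρ ℓ) (-1)).restrict h (bV j) = d j • bV j := by
    intro j
    refine Fin.cases ?_ ?_ j
    · have h0 : bV 0 = ⟨ℓ + ρ ℓ, hyV⟩ := by rw [hcoe]; exact Fin.cons_zero _ _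
      have hd0 : d 0 = -1 := Fin.cons_zero _ _
      rw [h0, hd0]
      apply Subtype.ext
      rw [LinearMap.restrict_apply]
      show GammaL n ℓ (ρ ℓ) (-1) (ℓ + ρ ℓ) = ((-1 : ℂ) • (⟨ℓ + ρ ℓ, hyV⟩ : V) : V).1
      rw [hGy]
      show -(ℓ + ρ ℓ) = (-1 : ℂ) • (ℓ + ρ ℓ)
      module
    · intro i
      have hsucc : bV i.succ = Submodule.inclusion hHleV (bH i) := by
        rw [hcoe]; exact Fin.cons_succ _ _ _
      have hdsucc : d i.succ = 1 := Fin.cons_succ _ _ _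
      rw [hsucc, hdsucc, one_smul]
      apply Subtype.ext
      rw [LinearMap.restrict_apply]
      exact part4 _ (bH i).2
  have hmat : LinearMap.toMatrix bV bV ((GammaL n ℓ (ρ ℓ) (-1)).restrict h)
      = Matrix.diagonal d := by
    ext i j
    rw [LinearMap.toMatrix_apply, hgb j, map_smul, Basis.repr_self]
    by_cases hij : i = j
    · subst hij
      simp [Matrix.diagonal]
    · simp [Matrix.diagonal_apply_ne, hij, Finsupp.single_apply, Ne.symm hij]
  rw [← LinearMap.det_toMatrix bV, hmat, Matrix.det_diagonal, Fin.prod_univ_succ]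
  simp [hddef]
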